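/- arXiv:2510.08198 — 2 statements merged into one kernel-verified Lean document; each statement's English description precedes it below -/
import Mathlib

section
/- For every α > 0 and every s > 0, the weighted integral of |u₀(s·)| over the sector W satisfies ∫_W |u₀(s x)| |x|^α dx ≤ 2 (θ_M − θ_m) Γ(2α + 4) δ_W^{−(2α+4)} s^{−α−2}, where Γ is the Gamma function. -/
open MeasureTheory

noncomputable section

/-- The polar angle of a point of `ℝ × ℝ`, via `Complex.arg`. -/
def argP (x : ℝ × ℝ) : ℝ := Complex.arg (x.1 + x.2 * Complex.I)

/-- The Euclidean norm (radius) of a point of `ℝ × ℝ`. -/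
def rad (x : ℝ × ℝ) : ℝ := Real.sqrt (x.1 ^ 2 + x.2 ^ 2)

/-- The CGO solution `u₀(x) = exp(√r (cos(θ/2 + π) + i sin(θ/2 + π)))`. -/
def u0 (x : ℝ × ℝ) : ℂ :=
  Complex.exp ((Real.sqrt (rad x) : ℂ) *
    ((Real.cos (argP x / 2 + Real.pi) : ℂ) + (Real.sin (argP x / 2 + Real.pi) : ℂ) * Complex.I))

/-- The open planar sector `W` with angles `θm < θ < θM`. -/
def sector (θm θM : ℝ) : Set (ℝ × ℝ) :=
  {x | x ≠ 0 ∧ θm < argP x ∧ argP x < θM}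

/-- `δ_W = - max_{θm ≤ θ ≤ θM} cos(θ/2 + π)`. -/
def deltaW (θm θM : ℝ) : ℝ :=
  -sSup ((fun θ : ℝ => Real.cos (θ / 2 + Real.pi)) '' Set.Icc θm θM)

/-- The open Euclidean disk of radius `h` centered at the origin of `ℝ × ℝ`. -/
def ballE (h : ℝ) : Set (ℝ × ℝ) := {x | rad x < h}

section Helpers

open Real Set

lemma rad_eq_abs (x : ℝ × ℝ) : rad x = ‖(x.1 + x.2 * Complex.I : ℂ)‖ := by
  rw [Complex.norm_def, Complex.normSq_add_mul_I]; rfl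

lemma mk_ne_zero {x : ℝ × ℝ} (hx : x ≠ 0) : (x.1 : ℂ) + x.2 * Complex.I ≠ 0 := by
  intro h
  apply hx
  have h1 : ((x.1 : ℂ) + x.2 * Complex.I).re = 0 := by rw [h]; simp
  have h2 : ((x.1 : ℂ) + x.2 * Complex.I).im = 0 := by rw [h]; simp
  simp at h1 h2
  exact Prod.ext h1 h2

lemma rad_pos {x : ℝ × ℝ} (hx : x ≠ 0) : 0 < rad x := by
  rw [rad_eq_abs]
  exact norm_pos_iff.mpr (mk_ne_zero hx)

lemma argP_polarCoord_symm {p : ℝ × ℝ} (hp1 : 0 < p.1) (hp2 : p.2 ∈ Set.Ioc (-π) π) :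
    argP (polarCoord.symm p) = p.2 := by
  unfold argP
  rw [polarCoord_symm_apply]
  have : ((p.1 * Real.cos p.2 : ℝ) : ℂ) + (p.1 * Real.sin p.2 : ℝ) * Complex.I
      = (p.1 : ℝ) * (Complex.cos p.2 + Complex.sin p.2 * Complex.I) := by
    push_cast [Complex.ofReal_cos, Complex.ofReal_sin]; ring
  rw [this, Complex.arg_real_mul _ hp1, Complex.arg_cos_add_sin_mul_I hp2]

lemma rad_polarCoord_symm {p : ℝ × ℝ} (hp1 : 0 ≤ p.1) : rad (polarCoord.symm p) = p.1 := by
  unfold rad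
  rw [polarCoord_symm_apply]
  have : (p.1 * Real.cos p.2) ^ 2 + (p.1 * Real.sin p.2) ^ 2 = p.1 ^ 2 := by
    have := Real.sin_sq_add_cos_sq p.2
    nlinarith [this]
  rw [this, Real.sqrt_sq hp1]

lemma symm_rad_argP {x : ℝ × ℝ} (hx : x ≠ 0) : polarCoord.symm (rad x, argP x) = x := by
  have hz : (x.1 : ℂ) + x.2 * Complex.I ≠ 0 := mk_ne_zero hx
  rw [polarCoord_symm_apply]
  have habs : ‖((x.1 : ℂ) + x.2 * Complex.I)‖ ≠ 0 := norm_ne_zero_iff.mpr hz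
  have hre : ((x.1 : ℂ) + x.2 * Complex.I).re = x.1 := by simp
  have him : ((x.1 : ℂ) + x.2 * Complex.I).im = x.2 := by simp
  have h1 : rad x * Real.cos (argP x) = x.1 := by
    rw [rad_eq_abs, argP, Complex.cos_arg hz, hre]
    field_simp
  have h2 : rad x * Real.sin (argP x) = x.2 := by
    rw [rad_eq_abs, argP, Complex.sin_arg, him]
    field_simp
  simp only [h1, h2]

lemma measurable_argP : Measurable argP :=
  Complex.measurable_arg.comp (by fun_prop)

lemma measurableSet_sector (θ1 θ2 : ℝ) : MeasurableSet (sector θ1 θ2) := by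
  have : sector θ1 θ2 = {(0 : ℝ × ℝ)}ᶜ ∩ argP ⁻¹' (Set.Ioo θ1 θ2) := by
    ext x; simp [sector, Set.mem_setOf_eq, and_assoc]
  rw [this]
  exact (measurableSet_singleton 0).compl.inter (measurable_argP measurableSet_Ioo)

lemma subset_target {θ1 θ2 : ℝ} (h1 : -π ≤ θ1) (h2 : θ2 ≤ π) :
    Set.Ioi (0:ℝ) ×ˢ Set.Ioo θ1 θ2 ⊆ polarCoord.target := by
  rw [polarCoord_target]
  exact Set.prod_mono_right (Set.Ioo_subset_Ioo h1 h2)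

lemma image_symm_sector {θ1 θ2 : ℝ} (h1 : -π ≤ θ1) (h2 : θ2 ≤ π) :
    polarCoord.symm '' (Set.Ioi (0:ℝ) ×ˢ Set.Ioo θ1 θ2) = sector θ1 θ2 := by
  ext x
  constructor
  · rintro ⟨p, ⟨hp1, hp2⟩, rfl⟩
    simp only [Set.mem_Ioi] at hp1
    simp only [Set.mem_Ioo] at hp2
    have hp2' : p.2 ∈ Set.Ioc (-π) π := ⟨lt_of_le_of_lt h1 hp2.1, le_trans hp2.2.le h2⟩
    have hr := rad_polarCoord_symm (p := p) hp1.le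
    have ha := argP_polarCoord_symm hp1 hp2'
    refine ⟨?_, by rw [ha]; exact hp2.1, by rw [ha]; exact hp2.2⟩
    intro h0
    rw [h0] at hr
    have : rad (0 : ℝ × ℝ) = 0 := by simp [rad]
    rw [this] at hr; exact absurd hr.symm (ne_of_gt hp1)
  · rintro ⟨hx0, hx1, hx2⟩
    exact ⟨(rad x, argP x), ⟨rad_pos hx0, hx1, hx2⟩, symm_rad_argP hx0⟩

lemma int1d {b q : ℝ} (hb : 0 < b) (hq : -1 < q) :
    IntegrableOn (fun x : ℝ => x ^ q * Real.exp (-b * x ^ (1/2 : ℝ))) (Set.Ioi 0) := by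
  refine (integrableOn_Ioi_comp_rpow_iff'
      (fun x => x ^ q * Real.exp (-b * x ^ (1/2 : ℝ))) (p := 2) two_ne_zero).mp ?_
  have H := integrableOn_rpow_mul_exp_neg_mul_rpow (s := 2*q+1) (p := 1) (by linarith) one_pos hb
  refine H.congr_fun (fun x hx => ?_) measurableSet_Ioi
  have hx : (0:ℝ) < x := hx
  have e1 : (x ^ (2:ℝ)) ^ q = x ^ (2*q) := by rw [← Real.rpow_mul hx.le]
  have e2 : (x ^ (2:ℝ)) ^ (1/2:ℝ) = x := by rw [← Real.rpow_mul hx.le]; norm_num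
  dsimp only
  rw [Real.rpow_one, smul_eq_mul, e1, e2, show (2:ℝ) - 1 = 1 by norm_num, Real.rpow_one,
    Real.rpow_add hx, Real.rpow_one]
  ring

lemma val1d {c α : ℝ} (hc : 0 < c) (hα : 0 < α) :
    ∫ r in Set.Ioi (0:ℝ), r * (Real.exp (-c * Real.sqrt r) * r ^ α)
      = c ^ (-(2*α+4)) * 2 * Real.Gamma (2*α+4) := by
  have h1 : ∫ r in Set.Ioi (0:ℝ), r * (Real.exp (-c * Real.sqrt r) * r ^ α)
      = ∫ r in Set.Ioi (0:ℝ), r ^ (α+1) * Real.exp (-c * r ^ (1/2:ℝ)) := by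
    refine setIntegral_congr_fun measurableSet_Ioi (fun r hr => ?_)
    have hr : (0:ℝ) < r := hr
    rw [Real.sqrt_eq_rpow, Real.rpow_add_one hr.ne']
    ring
  rw [h1, integral_rpow_mul_exp_neg_mul_rpow (by norm_num) (by linarith) hc]
  rw [show -(α+1+1)/(1/2:ℝ) = -(2*α+4) by ring, show (α+1+1)/(1/2:ℝ) = 2*α+4 by ring]
  norm_num

lemma sector_integrable {θ1 θ2 : ℝ} (h1 : -π ≤ θ1) (h12 : θ1 ≤ θ2) (h2 : θ2 ≤ π)
    {c α : ℝ} (hc : 0 < c) (hα : 0 < α) :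
    IntegrableOn (fun x => Real.exp (-c * Real.sqrt (rad x)) * rad x ^ α) (sector θ1 θ2) := by
  set B : ℝ × ℝ → ℝ × ℝ →L[ℝ] ℝ × ℝ := fun p =>
    LinearMap.toContinuousLinearMap (Matrix.toLin (Module.Basis.finTwoProd ℝ) (Module.Basis.finTwoProd ℝ)
      !![Real.cos p.2, -p.1 * Real.sin p.2; Real.sin p.2, p.1 * Real.cos p.2]) with hB
  have B_det : ∀ p, (B p).det = p.1 := by
    intro p
    conv_rhs => rw [← one_mul p.1, ← Real.cos_sq_add_sin_sq p.2]
    simp only [hB, neg_mul, LinearMap.det_toContinuousLinearMap, LinearMap.det_toLin,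
      Matrix.det_fin_two_of, sub_neg_eq_add]
    ring
  have hS : MeasurableSet (Set.Ioi (0:ℝ) ×ˢ Set.Ioo θ1 θ2) :=
    measurableSet_Ioi.prod measurableSet_Ioo
  have hder : ∀ p ∈ (Set.Ioi (0:ℝ) ×ˢ Set.Ioo θ1 θ2), HasFDerivWithinAt polarCoord.symm (B p)
      (Set.Ioi (0:ℝ) ×ˢ Set.Ioo θ1 θ2) p :=
    fun p _ => (hasFDerivAt_polarCoord_symm p).hasFDerivWithinAt
  have hinj : Set.InjOn polarCoord.symm (Set.Ioi (0:ℝ) ×ˢ Set.Ioo θ1 θ2) :=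
    polarCoord.symm.injOn.mono (subset_target h1 h2)
  rw [← image_symm_sector h1 h2,
    integrableOn_image_iff_integrableOn_abs_det_fderiv_smul volume hS hder hinj]
  have key : IntegrableOn
      (fun p : ℝ × ℝ => (p.1 * (Real.exp (-c * p.1 ^ (1/2:ℝ)) * p.1 ^ α)) * (1:ℝ))
      (Set.Ioi (0:ℝ) ×ˢ Set.Ioo θ1 θ2) := by
    have f1 : Integrable (fun r : ℝ => r * (Real.exp (-c * r ^ (1/2:ℝ)) * r ^ α))
        (volume.restrict (Set.Ioi (0:ℝ))) := by
      have := int1d (q := α + 1) hc (by linarith)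
      refine this.congr_fun (fun r hr => ?_) measurableSet_Ioi
      have hr : (0:ℝ) < r := hr
      dsimp only
      rw [Real.rpow_add_one hr.ne']
      ring
    have f2 : Integrable (fun _ : ℝ => (1:ℝ)) (volume.restrict (Set.Ioo θ1 θ2)) := by
      rw [← IntegrableOn]
      exact integrableOn_const (by rw [Real.volume_Ioo]; exact ENNReal.ofReal_ne_top)
    have := Integrable.mul_prod (L := ℝ) f1 f2
    rwa [Measure.prod_restrict, ← Measure.volume_eq_prod] at this
  refine key.congr_fun (fun p hp => ?_) hS
  obtain ⟨hp1, hp2⟩ := hp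
  have hp1 : (0:ℝ) < p.1 := hp1
  rw [smul_eq_mul, B_det, rad_polarCoord_symm hp1.le, abs_of_pos hp1, Real.sqrt_eq_rpow]
  ring

lemma sector_integral {θ1 θ2 : ℝ} (h1 : -π ≤ θ1) (h12 : θ1 ≤ θ2) (h2 : θ2 ≤ π)
    {c α : ℝ} (hc : 0 < c) (hα : 0 < α) :
    ∫ x in sector θ1 θ2, Real.exp (-c * Real.sqrt (rad x)) * rad x ^ α
      = (θ2 - θ1) * (c ^ (-(2*α+4)) * 2 * Real.Gamma (2*α+4)) := by
  set F : ℝ × ℝ → ℝ := fun x => Real.exp (-c * Real.sqrt (rad x)) * rad x ^ α with hF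
  set S : Set (ℝ × ℝ) := Set.Ioi (0:ℝ) ×ˢ Set.Ioo θ1 θ2 with hSdef
  have hS : MeasurableSet S := measurableSet_Ioi.prod measurableSet_Ioo
  have step1 : ∫ x in sector θ1 θ2, F x = ∫ x, Set.indicator (sector θ1 θ2) F x := by
    rw [integral_indicator (measurableSet_sector θ1 θ2)]
  have step2 : ∫ x, Set.indicator (sector θ1 θ2) F x
      = ∫ p in polarCoord.target, p.1 • Set.indicator (sector θ1 θ2) F (polarCoord.symm p) := by
    rw [integral_comp_polarCoord_symm]
  have step3 : ∫ p in polarCoord.target, p.1 • Set.indicator (sector θ1 θ2) F (polarCoord.symm p)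
      = ∫ p in polarCoord.target,
          Set.indicator S (fun p : ℝ × ℝ => p.1 * (Real.exp (-c * Real.sqrt p.1) * p.1 ^ α)) p := by
    refine setIntegral_congr_fun polarCoord.open_target.measurableSet (fun p hp => ?_)
    rw [polarCoord_target] at hp
    obtain ⟨hp1, hp2⟩ := hp
    have hp1 : (0:ℝ) < p.1 := hp1
    have hp2 : p.2 ∈ Set.Ioo (-π) π := hp2
    have hrads := rad_polarCoord_symm (p := p) hp1.le
    have hargs := argP_polarCoord_symm hp1 ⟨hp2.1, hp2.2.le⟩
    have hne : polarCoord.symm p ≠ 0 := by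
      intro h0
      rw [h0] at hrads
      have : rad (0 : ℝ × ℝ) = 0 := by simp [rad]
      rw [this] at hrads; exact absurd hrads.symm (ne_of_gt hp1)
    by_cases hmem : p ∈ S
    · have hmem' : polarCoord.symm p ∈ sector θ1 θ2 := by
        refine ⟨hne, ?_, ?_⟩ <;> rw [hargs]
        · exact hmem.2.1
        · exact hmem.2.2
      rw [Set.indicator_of_mem hmem, Set.indicator_of_mem hmem', hF]
      simp only [hrads, smul_eq_mul]
    · have hmem' : polarCoord.symm p ∉ sector θ1 θ2 := by
        intro hcon
        exact hmem ⟨hp1, by rw [← hargs]; exact hcon.2.1, by rw [← hargs]; exact hcon.2.2⟩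
      rw [Set.indicator_of_notMem hmem, Set.indicator_of_notMem hmem', smul_zero]
  have step4 : ∫ p in polarCoord.target,
        Set.indicator S (fun p : ℝ × ℝ => p.1 * (Real.exp (-c * Real.sqrt p.1) * p.1 ^ α)) p
      = ∫ p in S, p.1 * (Real.exp (-c * Real.sqrt p.1) * p.1 ^ α) := by
    rw [setIntegral_indicator hS, Set.inter_eq_self_of_subset_right (subset_target h1 h2)]
  have step5 : ∫ p in S, p.1 * (Real.exp (-c * Real.sqrt p.1) * p.1 ^ α)
      = (∫ r in Set.Ioi (0:ℝ), r * (Real.exp (-c * Real.sqrt r) * r ^ α))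
          * ∫ θ in Set.Ioo θ1 θ2, (1:ℝ) := by
    have := integral_prod_mul (L := ℝ) (μ := volume.restrict (Set.Ioi (0:ℝ)))
      (ν := volume.restrict (Set.Ioo θ1 θ2))
      (fun r => r * (Real.exp (-c * Real.sqrt r) * r ^ α)) (fun _ => (1:ℝ))
    rw [Measure.prod_restrict, ← Measure.volume_eq_prod] at this
    rw [← this, hSdef]
    refine setIntegral_congr_fun hS (fun p hp => ?_)
    ring
  rw [step1, step2, step3, step4, step5, val1d hc hα]
  rw [setIntegral_const, Real.volume_real_Ioo_of_le (by linarith), smul_eq_mul, mul_one]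
  ring

lemma norm_u0 (y : ℝ × ℝ) :
    ‖u0 y‖ = Real.exp (Real.sqrt (rad y) * Real.cos (argP y / 2 + π)) := by
  rw [u0, Complex.norm_exp]
  congr 1
  simp only [Complex.mul_re, Complex.add_re, Complex.add_im, Complex.mul_im,
    Complex.ofReal_re, Complex.ofReal_im, Complex.I_re, Complex.I_im]
  ring

lemma rad_smul {s : ℝ} (hs : 0 ≤ s) (x : ℝ × ℝ) : rad (s • x) = s * rad x := by
  unfold rad
  have h1 : (s • x).1 = s * x.1 := rfl
  have h2 : (s • x).2 = s * x.2 := rfl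
  rw [h1, h2, show (s*x.1)^2 + (s*x.2)^2 = s^2 * (x.1^2+x.2^2) by ring,
    Real.sqrt_mul (sq_nonneg s), Real.sqrt_sq hs]

lemma argP_smul {s : ℝ} (hs : 0 < s) (x : ℝ × ℝ) : argP (s • x) = argP x := by
  unfold argP
  have h1 : (s • x).1 = s * x.1 := rfl
  have h2 : (s • x).2 = s * x.2 := rfl
  rw [h1, h2, show ((s*x.1 : ℝ) : ℂ) + (s*x.2 : ℝ) * Complex.I
      = (s : ℝ) * ((x.1 : ℂ) + x.2 * Complex.I) by push_cast; ring,
    Complex.arg_real_mul _ hs]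

lemma cos_le_neg_deltaW {θm θM θ : ℝ} (h : θ ∈ Set.Icc θm θM) :
    Real.cos (θ / 2 + π) ≤ -deltaW θm θM := by
  rw [deltaW, neg_neg]
  refine le_csSup ⟨1, ?_⟩ (Set.mem_image_of_mem _ h)
  rintro y ⟨t, _, rfl⟩
  exact Real.cos_le_one _

lemma deltaW_pos {θm θM : ℝ} (hm : -π < θm) (hmM : θm ≤ θM) (hM : θM < π) :
    0 < deltaW θm θM := by
  rw [deltaW, neg_pos]
  obtain ⟨θ₀, hθ₀, hmax⟩ := isCompact_Icc.exists_isMaxOn (Set.nonempty_Icc.mpr hmM)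
    (Continuous.continuousOn (by continuity : Continuous fun θ : ℝ => Real.cos (θ / 2 + π)))
  have hlt : Real.cos (θ₀ / 2 + π) < 0 := by
    refine Real.cos_neg_of_pi_div_two_lt_of_lt ?_ ?_
    · have := hθ₀.1; nlinarith [hm]
    · have := hθ₀.2; nlinarith [hM]
  refine lt_of_le_of_lt (csSup_le ((Set.nonempty_Icc.mpr hmM).image _) ?_) hlt
  rintro y ⟨t, ht, rfl⟩
  exact hmax ht

lemma deltaW_neg_pi {θM : ℝ} (h0 : -π ≤ θM) (hM : θM ≤ π) : deltaW (-π) θM = 0 := by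
  rw [deltaW, neg_eq_zero]
  apply le_antisymm
  · refine csSup_le ((Set.nonempty_Icc.mpr h0).image _) ?_
    rintro y ⟨t, ht, rfl⟩
    refine Real.cos_nonpos_of_pi_div_two_le_of_le ?_ ?_
    · have := ht.1; linarith
    · have := ht.2; linarith
  · have hmem : (0:ℝ) ∈ (fun θ : ℝ => Real.cos (θ / 2 + π)) '' Set.Icc (-π) θM := by
      refine ⟨-π, Set.left_mem_Icc.mpr h0, ?_⟩
      show Real.cos (-π / 2 + π) = 0
      rw [show -π/2 + π = π/2 by ring, Real.cos_pi_div_two]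
    refine le_csSup ⟨1, ?_⟩ hmem
    rintro y ⟨t, _, rfl⟩
    exact Real.cos_le_one _

end Helpers

/-- for every `α > 0` and `s > 0`,
`∫_W |u₀(s x)| |x|^α dx ≤ 2 (θM − θm) Γ(2α + 4) δ_W^{−(2α+4)} s^{−α−2}`. -/
theorem stmt_1 (θm θM : ℝ) (hm : -Real.pi ≤ θm) (hmM : θm < θM) (hM : θM < Real.pi)
    (α s : ℝ) (hα : 0 < α) (hs : 0 < s) :
    ∫ x in sector θm θM, ‖u0 (s • x)‖ * rad x ^ α ≤
      2 * (θM - θm) * Real.Gamma (2 * α + 4) / deltaW θm θM ^ (2 * α + 4) *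
        s ^ (-α - 2) := by
  have fnn : ∀ x : ℝ × ℝ, 0 ≤ ‖u0 (s • x)‖ * rad x ^ α :=
    fun x => mul_nonneg (norm_nonneg _) (Real.rpow_nonneg (Real.sqrt_nonneg _) α)
  have fval : ∀ x : ℝ × ℝ, ‖u0 (s • x)‖ * rad x ^ α
      = Real.exp (Real.sqrt s * Real.sqrt (rad x) * Real.cos (argP x / 2 + Real.pi))
          * rad x ^ α := by
    intro x
    rw [norm_u0, rad_smul hs.le, argP_smul hs, Real.sqrt_mul hs.le]
  have hsq : 0 < Real.sqrt s := Real.sqrt_pos.mpr hs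
  rcases eq_or_lt_of_le hm with heq | hm'
  · -- degenerate case θm = -π : δ_W = 0 and the integral diverges, so both sides are 0
    subst heq
    have hδ0 : deltaW (-Real.pi) θM = 0 := deltaW_neg_pi (by linarith) hM.le
    rw [hδ0, Real.zero_rpow (by positivity : (2*α+4 : ℝ) ≠ 0), div_zero, zero_mul]
    rcases em (IntegrableOn (fun x => ‖u0 (s • x)‖ * rad x ^ α)
        (sector (-Real.pi) θM)) with H | H
    swap
    · rw [integral_undef H]
    exfalso
    set C := ∫ x in sector (-Real.pi) θM, ‖u0 (s • x)‖ * rad x ^ α with hC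
    have hC0 : 0 ≤ C := setIntegral_nonneg (measurableSet_sector _ _) (fun x _ => fnn x)
    set K := (Real.sqrt s) ^ (-(2*α+4)) * 2 * Real.Gamma (2*α+4) with hK
    have hKpos : 0 < K := mul_pos (mul_pos (Real.rpow_pos_of_pos hsq _) two_pos)
      (Real.Gamma_pos_of_pos (by linarith))
    set ε := min 1 (min ((θM + Real.pi)/2) ((K/(C+1)) ^ ((2*α+3)⁻¹))) with hεdef
    have hε : 0 < ε := lt_min one_pos (lt_min (by linarith)
      (Real.rpow_pos_of_pos (div_pos hKpos (by linarith)) _))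
    have hε1 : ε ≤ 1 := min_le_left _ _
    have hε2 : ε ≤ (θM + Real.pi)/2 := le_trans (min_le_right _ _) (min_le_left _ _)
    have hε3 : ε ≤ (K/(C+1)) ^ ((2*α+3)⁻¹) := le_trans (min_le_right _ _) (min_le_right _ _)
    have hc : 0 < ε * Real.sqrt s := mul_pos hε hsq
    have hsub : sector (-Real.pi + ε) (-Real.pi + 2*ε) ⊆ sector (-Real.pi) θM := by
      rintro x ⟨h0, ha, hb⟩
      exact ⟨h0, by linarith, by linarith⟩
    have glef : ∀ x ∈ sector (-Real.pi + ε) (-Real.pi + 2*ε),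
        Real.exp (-(ε * Real.sqrt s) * Real.sqrt (rad x)) * rad x ^ α
          ≤ ‖u0 (s • x)‖ * rad x ^ α := by
      rintro x ⟨h0, ha, hb⟩
      rw [fval x]
      refine mul_le_mul_of_nonneg_right ?_ (Real.rpow_nonneg (Real.sqrt_nonneg _) α)
      rw [Real.exp_le_exp]
      have hcos : -ε ≤ Real.cos (argP x / 2 + Real.pi) := by
        rw [Real.cos_add_pi, neg_le_neg_iff]
        have h1 : Real.cos (-(argP x / 2)) ≤ Real.cos (Real.pi/2 - ε) := by
          refine Real.cos_le_cos_of_nonneg_of_le_pi ?_ ?_ ?_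
          · linarith [Real.pi_gt_three]
          · linarith [Real.pi_gt_three]
          · linarith
        rw [Real.cos_neg] at h1
        rw [Real.cos_pi_div_two_sub] at h1
        exact le_trans h1 (Real.sin_le hε.le)
      have h2 := mul_le_mul_of_nonneg_left hcos
        (mul_nonneg (Real.sqrt_nonneg s) (Real.sqrt_nonneg (rad x)))
      nlinarith [h2]
    have h_lower : ∫ x in sector (-Real.pi + ε) (-Real.pi + 2*ε),
          Real.exp (-(ε * Real.sqrt s) * Real.sqrt (rad x)) * rad x ^ α
        ≤ ∫ x in sector (-Real.pi + ε) (-Real.pi + 2*ε), ‖u0 (s • x)‖ * rad x ^ α :=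
      integral_mono_of_nonneg
        (Filter.Eventually.of_forall (fun x =>
          mul_nonneg (Real.exp_nonneg _) (Real.rpow_nonneg (Real.sqrt_nonneg _) α)))
        (H.mono_set hsub)
        (ae_restrict_of_forall_mem (measurableSet_sector _ _) glef)
    have h_upper : ∫ x in sector (-Real.pi + ε) (-Real.pi + 2*ε), ‖u0 (s • x)‖ * rad x ^ α
        ≤ C :=
      setIntegral_mono_set H (Filter.Eventually.of_forall fnn)
        (HasSubset.Subset.eventuallyLE hsub)
    have h_val : ∫ x in sector (-Real.pi + ε) (-Real.pi + 2*ε),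
          Real.exp (-(ε * Real.sqrt s) * Real.sqrt (rad x)) * rad x ^ α
        = ε ^ (-(2*α+3)) * K := by
      rw [sector_integral (by linarith) (by linarith) (by linarith) hc hα]
      have e1 : (ε * Real.sqrt s) ^ (-(2*α+4))
          = ε ^ (-(2*α+4)) * (Real.sqrt s) ^ (-(2*α+4)) :=
        Real.mul_rpow hε.le (Real.sqrt_nonneg s)
      have e2 : ε * ε ^ (-(2*α+4)) = ε ^ (-(2*α+3)) := by
        rw [show -(2*α+3) = -(2*α+4)+1 by ring, Real.rpow_add_one hε.ne']
        ring
      rw [show (-Real.pi + 2*ε) - (-Real.pi + ε) = ε by ring, e1, hK, ← e2]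
      ring
    have hchain : ε ^ (-(2*α+3)) * K ≤ C := h_val ▸ le_trans h_lower h_upper
    have hp : (0:ℝ) < ε ^ (2*α+3) := Real.rpow_pos_of_pos hε _
    have h6 : ε ^ (2*α+3) ≤ K/(C+1) := by
      have h := Real.rpow_le_rpow hε.le hε3 (by linarith : (0:ℝ) ≤ 2*α+3)
      rwa [Real.rpow_inv_rpow (le_of_lt (div_pos hKpos (by linarith)))
        (by linarith : (2*α+3 : ℝ) ≠ 0)] at h
    have h7 : ε ^ (-(2*α+3)) = (ε ^ (2*α+3))⁻¹ := Real.rpow_neg hε.le _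
    have h8 : K ≤ ε ^ (2*α+3) * C := by
      calc K = ε ^ (2*α+3) * ((ε ^ (2*α+3))⁻¹ * K) := by field_simp
      _ ≤ ε ^ (2*α+3) * C := mul_le_mul_of_nonneg_left (h7 ▸ hchain) hp.le
    have h9 : ε ^ (2*α+3) * (C+1) ≤ K := by
      have h := mul_le_mul_of_nonneg_right h6 (by linarith : (0:ℝ) ≤ C+1)
      rwa [div_mul_cancel₀ _ (by linarith : C+1 ≠ 0)] at h
    nlinarith [le_trans h9 h8, hp]
  · -- main case : -π < θm, δ_W > 0
    have hδ : 0 < deltaW θm θM := deltaW_pos hm' hmM.le hM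
    have hc : 0 < deltaW θm θM * Real.sqrt s := mul_pos hδ hsq
    have bound : ∀ x ∈ sector θm θM, ‖u0 (s • x)‖ * rad x ^ α
        ≤ Real.exp (-(deltaW θm θM * Real.sqrt s) * Real.sqrt (rad x)) * rad x ^ α := by
      rintro x ⟨h0, ha, hb⟩
      rw [fval x]
      refine mul_le_mul_of_nonneg_right ?_ (Real.rpow_nonneg (Real.sqrt_nonneg _) α)
      rw [Real.exp_le_exp]
      have hcos : Real.cos (argP x / 2 + Real.pi) ≤ -deltaW θm θM :=
        cos_le_neg_deltaW ⟨ha.le, hb.le⟩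
      have h2 := mul_le_mul_of_nonneg_left hcos
        (mul_nonneg (Real.sqrt_nonneg s) (Real.sqrt_nonneg (rad x)))
      nlinarith [h2]
    have main : ∫ x in sector θm θM, ‖u0 (s • x)‖ * rad x ^ α
        ≤ ∫ x in sector θm θM,
            Real.exp (-(deltaW θm θM * Real.sqrt s) * Real.sqrt (rad x)) * rad x ^ α :=
      integral_mono_of_nonneg
        (Filter.Eventually.of_forall fnn)
        (sector_integrable hm hmM.le hM.le hc hα)
        (ae_restrict_of_forall_mem (measurableSet_sector _ _) bound)
    rw [sector_integral hm hmM.le hM.le hc hα] at main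
    refine le_trans main (le_of_eq ?_)
    have e1 : (deltaW θm θM * Real.sqrt s) ^ (-(2*α+4))
        = (deltaW θm θM ^ (2*α+4))⁻¹ * s ^ (-α-2) := by
      rw [Real.mul_rpow hδ.le (Real.sqrt_nonneg s), Real.rpow_neg hδ.le,
        Real.sqrt_eq_rpow, ← Real.rpow_mul hs.le,
        show (1/2 : ℝ)*(-(2*α+4)) = -α-2 by ring]
    rw [e1, div_eq_mul_inv]
    ring
end
end

section
/- For every s > 0 and h > 0, the radial (outward normal) derivative of x ↦ u₀(s x) on the circular arc Λ_h, namely ∂_r[u₀(s x)] = (√s/(2√r)) (cos(θ/2 + π) + i sin(θ/2 + π)) u₀(s x) evaluated at r = h, satisfies ( ∫_{Λ_h} |∂_r u₀(s x)|² dσ(x) )^{1/2} ≤ (1/2) √s · e^{−δ_W √(s h)} · √(θ_M − θ_m). -/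
open MeasureTheory

noncomputable section

lemma aux_norm_sq (s h θ : ℝ) (hs : 0 < s) (hh : 0 < h)
    (hθ : θ ∈ Set.Ioc (-Real.pi) Real.pi) :
    ‖((Real.sqrt s / (2 * Real.sqrt h) : ℝ) : ℂ) *
        ((Real.cos (θ / 2 + Real.pi) : ℂ) + (Real.sin (θ / 2 + Real.pi) : ℂ) * Complex.I) *
        u0 (s • ((h * Real.cos θ, h * Real.sin θ) : ℝ × ℝ))‖ ^ 2 * h =
      s / 4 * Real.exp (2 * Real.sqrt (s * h) * Real.cos (θ / 2 + Real.pi)) := by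
  have hsh : 0 < s * h := mul_pos hs hh
  set x : ℝ × ℝ := s • ((h * Real.cos θ, h * Real.sin θ) : ℝ × ℝ) with hx
  have hx1 : x.1 = s * (h * Real.cos θ) := rfl
  have hx2 : x.2 = s * (h * Real.sin θ) := rfl
  have hrad : rad x = s * h := by
    rw [rad, hx1, hx2]
    have : (s * (h * Real.cos θ)) ^ 2 + (s * (h * Real.sin θ)) ^ 2 = (s * h) ^ 2 := by
      have := Real.sin_sq_add_cos_sq θ; nlinarith
    rw [this, Real.sqrt_sq hsh.le]
  have harg : argP x = θ := by
    rw [argP, hx1, hx2]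
    have : ((s * (h * Real.cos θ) : ℝ) : ℂ) + ((s * (h * Real.sin θ) : ℝ) : ℂ) * Complex.I
        = ((s * h : ℝ) : ℂ) * (Complex.cos θ + Complex.sin θ * Complex.I) := by
      rw [← Complex.ofReal_cos, ← Complex.ofReal_sin]
      push_cast; ring
    rw [this, Complex.arg_real_mul _ hsh, Complex.arg_cos_add_sin_mul_I hθ]
  set c := Real.cos (θ / 2 + Real.pi)
  set d := Real.sin (θ / 2 + Real.pi)
  have hu : ‖u0 x‖ = Real.exp (Real.sqrt (s * h) * c) := by
    rw [u0, hrad, harg, Complex.norm_exp]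
    congr 1
    simp only [Complex.mul_re, Complex.add_re, Complex.add_im, Complex.mul_im,
      Complex.ofReal_re, Complex.ofReal_im, Complex.I_re, Complex.I_im]
    ring
  have hmid : ‖((c : ℂ) + (d : ℂ) * Complex.I)‖ = 1 := by
    rw [Complex.ofReal_cos, Complex.ofReal_sin,
      Complex.norm_cos_add_sin_mul_I]
  have hcoef : ‖((Real.sqrt s / (2 * Real.sqrt h) : ℝ) : ℂ)‖ = Real.sqrt s / (2 * Real.sqrt h) := by
    rw [Complex.norm_real, Real.norm_eq_abs, abs_of_nonneg (by positivity)]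
  rw [norm_mul, norm_mul, hcoef, hmid, hu]
  have e2 : Real.exp (Real.sqrt (s * h) * c) ^ 2 = Real.exp (2 * Real.sqrt (s * h) * c) := by
    rw [sq, ← Real.exp_add]; ring_nf
  calc (Real.sqrt s / (2 * Real.sqrt h) * 1 * Real.exp (Real.sqrt (s * h) * c)) ^ 2 * h
      = (Real.sqrt s ^ 2) / (4 * (Real.sqrt h ^ 2)) * Real.exp (Real.sqrt (s * h) * c) ^ 2 * h := by
        ring
    _ = s / (4 * h) * Real.exp (Real.sqrt (s * h) * c) ^ 2 * h := by
        rw [Real.sq_sqrt hs.le, Real.sq_sqrt hh.le]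
    _ = s / 4 * Real.exp (2 * Real.sqrt (s * h) * c) := by
        rw [e2]; field_simp

/-- for every `s > 0` and `h > 0`, the radial derivative
`∂_r[u₀(s x)] = (√s/(2√r)) (cos(θ/2 + π) + i sin(θ/2 + π)) u₀(s x)` at `r = h` satisfies
`(∫_{Λ_h} |∂_r u₀(s x)|² dσ)^{1/2} ≤ (1/2) √s e^{−δ_W √(s h)} √(θM − θm)`. -/
theorem stmt_6 (θm θM : ℝ) (hm : -Real.pi ≤ θm) (hmM : θm < θM) (hM : θM < Real.pi)
    (s h : ℝ) (hs : 0 < s) (hh : 0 < h) :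
    Real.sqrt (∫ θ in Set.Ioo θm θM,
        ‖((Real.sqrt s / (2 * Real.sqrt h) : ℝ) : ℂ) *
            ((Real.cos (θ / 2 + Real.pi) : ℂ) + (Real.sin (θ / 2 + Real.pi) : ℂ) * Complex.I) *
            u0 (s • ((h * Real.cos θ, h * Real.sin θ) : ℝ × ℝ))‖ ^ 2 * h) ≤
      1 / 2 * Real.sqrt s * Real.exp (-(deltaW θm θM) * Real.sqrt (s * h)) *
        Real.sqrt (θM - θm) := by
  set δ := deltaW θm θM with hδ
  have hsh : (0:ℝ) ≤ Real.sqrt (s * h) := Real.sqrt_nonneg _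
  have hcos : ∀ θ ∈ Set.Icc θm θM, Real.cos (θ / 2 + Real.pi) ≤ -δ := by
    intro θ hθ
    have hbdd : BddAbove ((fun θ : ℝ => Real.cos (θ / 2 + Real.pi)) '' Set.Icc θm θM) :=
      ⟨1, by rintro y ⟨t, -, rfl⟩; exact Real.cos_le_one _⟩
    have := le_csSup hbdd (Set.mem_image_of_mem _ hθ)
    simpa [hδ, deltaW] using this
  set C : ℝ := s / 4 * Real.exp (2 * Real.sqrt (s * h) * (-δ)) with hC
  have hrw : ∫ θ in Set.Ioo θm θM,
        ‖((Real.sqrt s / (2 * Real.sqrt h) : ℝ) : ℂ) *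
            ((Real.cos (θ / 2 + Real.pi) : ℂ) + (Real.sin (θ / 2 + Real.pi) : ℂ) * Complex.I) *
            u0 (s • ((h * Real.cos θ, h * Real.sin θ) : ℝ × ℝ))‖ ^ 2 * h
      = ∫ θ in Set.Ioo θm θM, s / 4 * Real.exp (2 * Real.sqrt (s * h) * Real.cos (θ / 2 + Real.pi)) := by
    refine setIntegral_congr_fun measurableSet_Ioo fun θ hθ => ?_
    exact aux_norm_sq s h θ hs hh ⟨lt_of_le_of_lt hm hθ.1, (hθ.2.trans hM).le⟩
  have hf_int : IntegrableOn
      (fun θ => s / 4 * Real.exp (2 * Real.sqrt (s * h) * Real.cos (θ / 2 + Real.pi)))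
      (Set.Ioo θm θM) := by
    apply (Continuous.integrableOn_Icc (by fun_prop)).mono_set Set.Ioo_subset_Icc_self
  have hint : ∫ θ in Set.Ioo θm θM,
        s / 4 * Real.exp (2 * Real.sqrt (s * h) * Real.cos (θ / 2 + Real.pi)) ≤ (θM - θm) * C := by
    have h1 : ∫ θ in Set.Ioo θm θM,
          s / 4 * Real.exp (2 * Real.sqrt (s * h) * Real.cos (θ / 2 + Real.pi))
        ≤ ∫ _θ in Set.Ioo θm θM, C := by
      refine setIntegral_mono_on hf_int (integrableOn_const ?_) measurableSet_Ioo ?_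
      · exact measure_Ioo_lt_top.ne
      · intro θ hθ
        have hc := hcos θ ⟨hθ.1.le, hθ.2.le⟩
        have : 2 * Real.sqrt (s * h) * Real.cos (θ / 2 + Real.pi)
            ≤ 2 * Real.sqrt (s * h) * (-δ) := by
          apply mul_le_mul_of_nonneg_left hc (by positivity)
        exact mul_le_mul_of_nonneg_left (Real.exp_le_exp.2 this) (by positivity)
    rw [setIntegral_const, Real.volume_real_Ioo_of_le (by linarith), smul_eq_mul] at h1
    exact h1
  have hB : 0 ≤ 1 / 2 * Real.sqrt s * Real.exp (-δ * Real.sqrt (s * h)) * Real.sqrt (θM - θm) := by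
    positivity
  refine le_trans (Real.sqrt_le_sqrt ?_) (le_of_eq (Real.sqrt_sq hB))
  rw [hrw]
  refine hint.trans (le_of_eq ?_)
  have e2 : Real.exp (-δ * Real.sqrt (s * h)) ^ 2 = Real.exp (2 * Real.sqrt (s * h) * (-δ)) := by
    rw [sq, ← Real.exp_add]; ring_nf
  have hθθ : Real.sqrt (θM - θm) ^ 2 = θM - θm := Real.sq_sqrt (by linarith)
  have hs2 : Real.sqrt s ^ 2 = s := Real.sq_sqrt hs.le
  calc (θM - θm) * C = (1/2)^2 * s * Real.exp (2 * Real.sqrt (s * h) * (-δ)) * (θM - θm) := by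
        rw [hC]; ring
    _ = (1 / 2 * Real.sqrt s * Real.exp (-δ * Real.sqrt (s * h)) * Real.sqrt (θM - θm)) ^ 2 := by
        rw [mul_pow, mul_pow, mul_pow, hs2, hθθ, e2]
end
end
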